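/- Let μ,ν>0 with Sc=ν/μ, let ε>0, set κ'_β=(ε/(νμ²))^{1/4}, and fix constants c0 ≥ 1 and c1,…,c5>0 with c4 ≤ Sc ≤ c5. Let t be a tracer spectrum (3D framework) with shell sums 𝐭, dissipation rate χ and wavenumber κ_θ, and let wavenumbers satisfy κ0 ≤ κg ≤ c0·κ0 and 4κg ≤ κ_ε. Assume: (i) for every κ∈[κg,κ_ε], c1·χ·ε^{-1/3}·κ^{-2/3} ≤ 𝐭_{κ,2κ} ≤ c2·χ·ε^{-1/3}·κ^{-2/3}; (ii) 𝐭_{κ0,∞} ≤ c3·𝐭_{κg,κ_ε}. Then there exist constants c,C>0 depending only on c0,…,c5 such that c·(κ'_β)^{4/3}·κ0^{2/3} ≤ κ_θ² ≤ C·(κ'_β)^{4/3}·κ0^{2/3}. (The moderate-Schmidt-number 3D case of Section 6.1: κ_θ ∼ (κ'_β)^{2/3}·κ0^{1/3}.) -/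

import Mathlib

open Real

/-- Euclidean norm of a lattice vector `k ∈ ℤ^d`. -/
noncomputable def knorm {d : ℕ} (k : Fin d → ℤ) : ℝ :=
  Real.sqrt (∑ i, ((k i : ℝ)) ^ 2)

/-- Shell sum `𝐭_{κ1,κ2}` (finite upper end). -/
noncomputable def shellSum (d : ℕ) (L κ0 : ℝ) (t : (Fin d → ℤ) → ℝ) (κ1 κ2 : ℝ) : ℝ :=
  L ^ (-(d : ℤ)) * ∑' k : Fin d → ℤ,
    (if κ1 ≤ κ0 * knorm k ∧ κ0 * knorm k < κ2 then t k else 0)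

/-- Shell sum `𝐭_{κ1,∞}`. -/
noncomputable def shellSumTop (d : ℕ) (L κ0 : ℝ) (t : (Fin d → ℤ) → ℝ) (κ1 : ℝ) : ℝ :=
  L ^ (-(d : ℤ)) * ∑' k : Fin d → ℤ, (if κ1 ≤ κ0 * knorm k then t k else 0)

/-- Tracer dissipation rate `χ = μ L^{-d} κ0² Σ_k |k|² t(k)`. -/
noncomputable def chiRate (d : ℕ) (L κ0 μ : ℝ) (t : (Fin d → ℤ) → ℝ) : ℝ :=
  μ * L ^ (-(d : ℤ)) * κ0 ^ 2 * ∑' k : Fin d → ℤ, knorm k ^ 2 * t k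

/-- Indicator wavenumber squared, `κ_θ² = κ0² Σ|k|²t(k) / Σ t(k)`. -/
noncomputable def kThetaSq (d : ℕ) (κ0 : ℝ) (t : (Fin d → ℤ) → ℝ) : ℝ :=
  κ0 ^ 2 * (∑' k : Fin d → ℤ, knorm k ^ 2 * t k) / (∑' k : Fin d → ℤ, t k)

/-- A (discrete) tracer spectrum: nonnegative, vanishing at `k = 0`, not identically
zero, and with `Σ (1+|k|²) t(k) < ∞`. -/
structure IsTracerSpectrum (d : ℕ) (t : (Fin d → ℤ) → ℝ) : Prop where
  nonneg : ∀ k, 0 ≤ t k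
  map_zero : t 0 = 0
  exists_ne_zero : ∃ k, t k ≠ 0
  summable : Summable fun k : Fin d → ℤ => (1 + knorm k ^ 2) * t k

lemma knorm_nonneg {d : ℕ} (k : Fin d → ℤ) : 0 ≤ knorm k := Real.sqrt_nonneg _

lemma knorm_zero {d : ℕ} : knorm (0 : Fin d → ℤ) = 0 := by simp [knorm]

lemma one_le_knorm {d : ℕ} {k : Fin d → ℤ} (hk : k ≠ 0) : 1 ≤ knorm k := by
  obtain ⟨i, hi⟩ : ∃ i, k i ≠ 0 := by
    by_contra h; push_neg at h; exact hk (funext h)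
  have h1 : (1 : ℝ) ≤ ((k i : ℝ)) ^ 2 := by
    have : (1 : ℤ) ≤ (k i) ^ 2 := by
      have := Int.one_le_abs (by simpa using hi)
      nlinarith [sq_abs (k i)]
    exact_mod_cast this
  have h2 : (1 : ℝ) ≤ ∑ j, ((k j : ℝ)) ^ 2 :=
    h1.trans (Finset.single_le_sum (f := fun j => ((k j : ℝ))^2) (fun j _ => sq_nonneg _) (Finset.mem_univ i))
  calc (1 : ℝ) = Real.sqrt 1 := Real.sqrt_one.symm
    _ ≤ knorm k := Real.sqrt_le_sqrt h2

lemma ite_nonneg' {c : Prop} [Decidable c] {a : ℝ} (ha : 0 ≤ a) :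
    0 ≤ if c then a else 0 := by split_ifs <;> simp [ha]

lemma ite_le_self' {c : Prop} [Decidable c] {a : ℝ} (ha : 0 ≤ a) :
    (if c then a else 0) ≤ a := by split_ifs <;> simp [ha]

lemma summable_of_tracer {d : ℕ} {t : (Fin d → ℤ) → ℝ} (ht : IsTracerSpectrum d t) :
    Summable t :=
  ht.summable.of_nonneg_of_le (fun k => ht.nonneg k)
    (fun k => le_mul_of_one_le_left (ht.nonneg k) (by nlinarith [sq_nonneg (knorm k)]))

lemma summable_sq_of_tracer {d : ℕ} {t : (Fin d → ℤ) → ℝ} (ht : IsTracerSpectrum d t) :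
    Summable fun k => knorm k ^ 2 * t k :=
  ht.summable.of_nonneg_of_le (fun k => mul_nonneg (sq_nonneg _) (ht.nonneg k))
    (fun k => by nlinarith [ht.nonneg k, sq_nonneg (knorm k)])

lemma summable_ite_of_tracer {d : ℕ} {t : (Fin d → ℤ) → ℝ} (ht : IsTracerSpectrum d t)
    (P : (Fin d → ℤ) → Prop) [DecidablePred P] :
    Summable fun k => if P k then t k else 0 :=
  (summable_of_tracer ht).of_nonneg_of_le (fun k => ite_nonneg' (ht.nonneg k))
    (fun k => ite_le_self' (ht.nonneg k))
set_option maxHeartbeats 1000000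

/-- Section 6.1, moderate Schmidt number in 3D: `κ_θ ∼ (κ'_β)^{2/3} κ0^{1/3}`. -/
theorem tracer_3D_moderate_Schmidt
    (c0 c1 c2 c3 c4 c5 : ℝ)
    (hc0 : 1 ≤ c0) (hc1 : 0 < c1) (hc2 : 0 < c2) (hc3 : 0 < c3)
    (hc4 : 0 < c4) (hc5 : 0 < c5) :
    ∃ c C : ℝ, 0 < c ∧ 0 < C ∧
      ∀ (L μ ν ε κg κε κ0 Sc κβ' χ : ℝ) (t : (Fin 3 → ℤ) → ℝ),
        0 < L → 0 < μ → 0 < ν → 0 < ε →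
        IsTracerSpectrum 3 t →
        κ0 = 2 * π / L →
        Sc = ν / μ →
        c4 ≤ Sc → Sc ≤ c5 →
        κβ' = (ε / (ν * μ ^ 2)) ^ (1 / 4 : ℝ) →
        χ = chiRate 3 L κ0 μ t →
        κ0 ≤ κg → κg ≤ c0 * κ0 → 4 * κg ≤ κε →
        (∀ κ, κg ≤ κ → κ ≤ κε →
          c1 * χ * ε ^ (-1 / 3 : ℝ) * κ ^ (-2 / 3 : ℝ) ≤ shellSum 3 L κ0 t κ (2 * κ) ∧
          shellSum 3 L κ0 t κ (2 * κ) ≤ c2 * χ * ε ^ (-1 / 3 : ℝ) * κ ^ (-2 / 3 : ℝ)) →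
        shellSumTop 3 L κ0 t κ0 ≤ c3 * shellSum 3 L κ0 t κg κε →
        c * κβ' ^ (4 / 3 : ℝ) * κ0 ^ (2 / 3 : ℝ) ≤ kThetaSq 3 κ0 t ∧
          kThetaSq 3 κ0 t ≤ C * κβ' ^ (4 / 3 : ℝ) * κ0 ^ (2 / 3 : ℝ) := by
  have hr1 : (0:ℝ) < (2:ℝ) ^ (-2/3 : ℝ) := Real.rpow_pos_of_pos (by norm_num) _
  have hr2 : (2:ℝ) ^ (-2/3 : ℝ) < 1 :=
    Real.rpow_lt_one_of_one_lt_of_neg (by norm_num) (by norm_num)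
  set r : ℝ := (2:ℝ) ^ (-2/3 : ℝ) with hrdef
  refine ⟨(1 - r) * c4 ^ (1/3 : ℝ) / (c2 * c3), c0 ^ (2/3 : ℝ) * c5 ^ (1/3 : ℝ) / c1,
    div_pos (mul_pos (by linarith) (Real.rpow_pos_of_pos hc4 _)) (mul_pos hc2 hc3),
    div_pos (mul_pos (Real.rpow_pos_of_pos (by linarith) _) (Real.rpow_pos_of_pos hc5 _)) hc1,
    ?_⟩
  intro L μ ν ε κg κε κ0 Sc κβ' χ t hL hμ hν hε ht hκ0 hSc hSc1 hSc2 hκβ hχ hκ0g hκgc0 h4 hShell hTopBound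
  have hπ := Real.pi_pos
  have hκ0pos : 0 < κ0 := by rw [hκ0]; positivity
  have hκg : 0 < κg := lt_of_lt_of_le hκ0pos hκ0g
  have hκε : κg ≤ κε := by linarith
  set lv : ℝ := L ^ (-((3:ℕ):ℤ)) with hlvdef
  have hlv : 0 < lv := by rw [hlvdef]; positivity
  set S := ∑' k : Fin 3 → ℤ, t k with hSdef
  set Q := ∑' k : Fin 3 → ℤ, knorm k ^ 2 * t k with hQdef
  have hSsum := summable_of_tracer ht
  have hQsum := summable_sq_of_tracer ht
  obtain ⟨k₀, hk₀⟩ := ht.exists_ne_zero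
  have hk₀pos : 0 < t k₀ := (ht.nonneg k₀).lt_of_ne (Ne.symm hk₀)
  have hk₀ne : k₀ ≠ 0 := fun h => hk₀ (h ▸ ht.map_zero)
  have hSpos : 0 < S := lt_of_lt_of_le hk₀pos (Summable.le_tsum hSsum k₀ fun j _ => ht.nonneg j)
  have hQpos : 0 < Q := by
    have h1 : (0:ℝ) < knorm k₀ ^ 2 * t k₀ :=
      mul_pos (by nlinarith [one_le_knorm hk₀ne]) hk₀pos
    exact lt_of_lt_of_le h1 (Summable.le_tsum hQsum k₀ fun j _ => mul_nonneg (sq_nonneg _) (ht.nonneg j))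
  have hχeq : χ = μ * lv * κ0 ^ 2 * Q := hχ
  have hχpos : 0 < χ := by rw [hχeq]; positivity
  -- shellSumTop at κ0 is the full sum
  have hTopEq : shellSumTop 3 L κ0 t κ0 = lv * S := by
    have h : ∀ k : Fin 3 → ℤ, (if κ0 ≤ κ0 * knorm k then t k else 0) = t k := by
      intro k
      by_cases hk : k = 0
      · subst hk; simp [knorm_zero, ht.map_zero]
      · rw [if_pos (le_mul_of_one_le_right hκ0pos.le (one_le_knorm hk))]
    rw [shellSumTop, tsum_congr h]
  -- any shell sum is at most the full sum
  have hain : ∀ (κ1 κ2 : ℝ), shellSum 3 L κ0 t κ1 κ2 ≤ lv * S := by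
    intro κ1 κ2
    rw [shellSum, hSdef]
    exact mul_le_mul_of_nonneg_left
      (Summable.tsum_le_tsum (fun k => ite_le_self' (ht.nonneg k)) (summable_ite_of_tracer ht _) hSsum)
      hlv.le
  have hLo : c1 * χ * ε ^ (-1/3 : ℝ) * κg ^ (-2/3 : ℝ) ≤ lv * S :=
    le_trans (hShell κg le_rfl hκε).1 (hain κg (2*κg))
  -- dyadic covering for the upper bound
  obtain ⟨N, hN⟩ := pow_unbounded_of_one_lt (κε / κg) (by norm_num : (1:ℝ) < 2)
  have hκεlt : κε < 2 ^ N * κg := by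
    rw [div_lt_iff₀ hκg] at hN; linarith
  set f : ℕ → (Fin 3 → ℤ) → ℝ := fun j k =>
    if 2 ^ j * κg ≤ κ0 * knorm k ∧ κ0 * knorm k < 2 ^ (j+1) * κg ∧ κ0 * knorm k < κε
    then t k else 0 with hfdef
  have hfsum : ∀ j, Summable (f j) := fun j => summable_ite_of_tracer ht _
  have hfnn : ∀ j k, 0 ≤ f j k := fun j k => ite_nonneg' (ht.nonneg k)
  have hcover : ∀ k : Fin 3 → ℤ,
      (if κg ≤ κ0 * knorm k ∧ κ0 * knorm k < κε then t k else 0) ≤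
        ∑ j ∈ Finset.range N, f j k := by
    intro k
    by_cases h : κg ≤ κ0 * knorm k ∧ κ0 * knorm k < κε
    · set x := κ0 * knorm k with hx
      have hxκg : 1 ≤ x / κg := (one_le_div hκg).2 h.1
      set n := ⌊x / κg⌋₊ with hn
      have hn1 : 1 ≤ n := Nat.le_floor (by exact_mod_cast hxκg)
      set j := Nat.log 2 n with hj
      have hj1 : (2:ℝ) ^ j ≤ x / κg := by
        calc ((2:ℝ)^j) = ((2^j : ℕ) : ℝ) := by push_cast; ring
          _ ≤ (n : ℝ) := by exact_mod_cast Nat.pow_log_le_self 2 (by omega)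
          _ ≤ x / κg := Nat.floor_le (by linarith)
      have hj2 : x / κg < (2:ℝ) ^ (j+1) := by
        have h1 : n < 2 ^ (j+1) := Nat.lt_pow_succ_log_self (by norm_num) n
        have h2 : x / κg < (n:ℝ) + 1 := Nat.lt_floor_add_one _
        have h3 : ((n:ℝ)) + 1 ≤ (2:ℝ) ^ (j+1) := by exact_mod_cast Nat.succ_le_of_lt h1
        linarith
      rw [le_div_iff₀ hκg] at hj1
      rw [div_lt_iff₀ hκg] at hj2
      have hmem : j ∈ Finset.range N := by
        rw [Finset.mem_range]
        have hp : (2:ℝ)^j * κg < 2^N * κg := by linarith [h.2]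
        exact (pow_lt_pow_iff_right₀ (by norm_num : (1:ℝ) < 2)).1 ((mul_lt_mul_iff_of_pos_right hκg).1 hp)
      have hfj : f j k = t k := by
        simp only [hfdef]
        exact if_pos ⟨hj1, hj2, h.2⟩
      calc (if κg ≤ κ0 * knorm k ∧ κ0 * knorm k < κε then t k else 0) = t k := if_pos h
        _ = f j k := hfj.symm
        _ ≤ ∑ j ∈ Finset.range N, f j k :=
          Finset.single_le_sum (fun i _ => hfnn i k) hmem
    · rw [if_neg h]; exact Finset.sum_nonneg fun i _ => hfnn i k
  have hεn : (0:ℝ) ≤ ε ^ (-1/3 : ℝ) := Real.rpow_nonneg hε.le _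
  have hjbound : ∀ j : ℕ,
      lv * ∑' k, f j k ≤ c2 * χ * ε ^ (-1/3:ℝ) * ((2:ℝ)^j * κg) ^ (-2/3:ℝ) := by
    intro j
    by_cases hjκ : (2:ℝ)^j * κg ≤ κε
    · have h2e : (2:ℝ)^(j+1)*κg = 2*((2:ℝ)^j*κg) := by ring
      have hsub : lv * ∑' k, f j k ≤ shellSum 3 L κ0 t ((2:ℝ)^j*κg) (2 * ((2:ℝ)^j*κg)) := by
        rw [shellSum]
        refine mul_le_mul_of_nonneg_left
          (Summable.tsum_le_tsum ?_ (hfsum j) (summable_ite_of_tracer ht _)) hlv.le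
        intro k
        simp only [hfdef]
        by_cases hk : 2^j*κg ≤ κ0*knorm k ∧ κ0*knorm k < 2^(j+1)*κg ∧ κ0*knorm k < κε
        · rw [if_pos hk, if_pos ⟨hk.1, by rw [← h2e]; exact hk.2.1⟩]
        · rw [if_neg hk]; exact ite_nonneg' (ht.nonneg k)
      refine hsub.trans (hShell _ (le_mul_of_one_le_left hκg.le (one_le_pow₀ (by norm_num))) hjκ).2
    · have hz : ∀ k, f j k = 0 := by
        intro k; simp only [hfdef]; rw [if_neg]
        rintro ⟨h1, _, h3⟩; push_neg at hjκ; linarith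
      simp only [hz, tsum_zero, mul_zero]
      exact mul_nonneg (mul_nonneg (mul_nonneg hc2.le hχpos.le) hεn)
        (Real.rpow_nonneg (by positivity) _)
  have hrgeom : ∀ j : ℕ, ((2:ℝ)^j * κg) ^ (-2/3:ℝ) = r ^ j * κg ^ (-2/3:ℝ) := by
    intro j
    rw [Real.mul_rpow (by positivity) hκg.le]
    congr 1
    rw [← Real.rpow_natCast (2:ℝ) j, hrdef, ← Real.rpow_natCast ((2:ℝ) ^ (-2/3:ℝ)) j,
      ← Real.rpow_mul (by norm_num : (0:ℝ) ≤ 2), ← Real.rpow_mul (by norm_num : (0:ℝ) ≤ 2)]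
    ring_nf
  have hgeo : ∑ j ∈ Finset.range N, r ^ j ≤ (1 - r)⁻¹ := by
    rw [← tsum_geometric_of_lt_one hr1.le hr2]
    exact Summable.sum_le_tsum _ (fun i _ => pow_nonneg hr1.le i) (summable_geometric_of_lt_one hr1.le hr2)
  have hUp : lv * S ≤ c3 * (c2 * χ * ε^(-1/3:ℝ) * κg^(-2/3:ℝ) * (1-r)⁻¹) := by
    have h2 : shellSum 3 L κ0 t κg κε ≤ ∑ j ∈ Finset.range N, lv * ∑' k, f j k := by
      rw [shellSum]
      calc lv * ∑' k, (if κg ≤ κ0 * knorm k ∧ κ0 * knorm k < κε then t k else 0)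
          ≤ lv * ∑' k, ∑ j ∈ Finset.range N, f j k :=
            mul_le_mul_of_nonneg_left (Summable.tsum_le_tsum hcover (summable_ite_of_tracer ht _)
              (summable_sum (fun j _ => hfsum j))) hlv.le
        _ = ∑ j ∈ Finset.range N, lv * ∑' k, f j k := by
            rw [Summable.tsum_finsetSum (fun j _ => hfsum j), Finset.mul_sum]
    have h1 : shellSum 3 L κ0 t κg κε ≤ c2 * χ * ε^(-1/3:ℝ) * κg^(-2/3:ℝ) * (1-r)⁻¹ := by
      refine h2.trans ?_
      calc ∑ j ∈ Finset.range N, lv * ∑' k, f j k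
          ≤ ∑ j ∈ Finset.range N, c2 * χ * ε^(-1/3:ℝ) * ((2:ℝ)^j * κg)^(-2/3:ℝ) :=
            Finset.sum_le_sum (fun j _ => hjbound j)
        _ = ∑ j ∈ Finset.range N, (c2 * χ * ε^(-1/3:ℝ) * κg^(-2/3:ℝ)) * r ^ j :=
            Finset.sum_congr rfl (fun j _ => by rw [hrgeom]; ring)
        _ = (c2 * χ * ε^(-1/3:ℝ) * κg^(-2/3:ℝ)) * ∑ j ∈ Finset.range N, r ^ j :=
            (Finset.mul_sum _ _ _).symm
        _ ≤ (c2 * χ * ε^(-1/3:ℝ) * κg^(-2/3:ℝ)) * (1-r)⁻¹ :=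
            mul_le_mul_of_nonneg_left hgeo
              (mul_nonneg (mul_nonneg (mul_nonneg hc2.le hχpos.le) hεn)
                (Real.rpow_nonneg hκg.le _))
    calc lv * S = shellSumTop 3 L κ0 t κ0 := hTopEq.symm
      _ ≤ c3 * shellSum 3 L κ0 t κg κε := hTopBound
      _ ≤ _ := mul_le_mul_of_nonneg_left h1 hc3.le
  -- kThetaSq in terms of χ
  have hkT : kThetaSq 3 κ0 t = χ / (μ * (lv * S)) := by
    rw [kThetaSq, ← hSdef, ← hQdef, hχeq]
    field_simp
  -- rpow bookkeeping
  have he : (0:ℝ) < ε ^ (1/3:ℝ) := Real.rpow_pos_of_pos hε _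
  have hg : (0:ℝ) < κg ^ (2/3:ℝ) := Real.rpow_pos_of_pos hκg _
  have hk0' : (0:ℝ) < κ0 ^ (2/3:ℝ) := Real.rpow_pos_of_pos hκ0pos _
  have hScpos : 0 < Sc := lt_of_lt_of_le hc4 hSc1
  have hs : (0:ℝ) < Sc ^ (1/3:ℝ) := Real.rpow_pos_of_pos hScpos _
  have hεinv : ε ^ (-1/3:ℝ) = (ε ^ (1/3:ℝ))⁻¹ := by
    rw [show (-1/3:ℝ) = -(1/3) by norm_num, Real.rpow_neg hε.le]
  have hκginv : κg ^ (-2/3:ℝ) = (κg ^ (2/3:ℝ))⁻¹ := by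
    rw [show (-2/3:ℝ) = -(2/3) by norm_num, Real.rpow_neg hκg.le]
  have hκβeq : κβ' ^ (4/3:ℝ) = ε ^ (1/3:ℝ) / (Sc ^ (1/3:ℝ) * μ) := by
    rw [hκβ, ← Real.rpow_mul (by positivity), show (1/4 : ℝ) * (4/3) = 1/3 by norm_num]
    have h1 : ε / (ν * μ^2) = (ε / μ^3) / Sc := by rw [hSc]; field_simp
    have h2 : ((μ:ℝ)^3) ^ (1/3:ℝ) = μ := by
      rw [← Real.rpow_natCast μ 3, ← Real.rpow_mul hμ.le]; norm_num
    rw [h1, Real.div_rpow (by positivity) hScpos.le, Real.div_rpow hε.le (by positivity), h2]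
    rw [div_div]
    ring_nf
  have hgk0 : κ0 ^ (2/3:ℝ) ≤ κg ^ (2/3:ℝ) := Real.rpow_le_rpow hκ0pos.le hκ0g (by norm_num)
  have hgc0 : κg ^ (2/3:ℝ) ≤ c0 ^ (2/3:ℝ) * κ0 ^ (2/3:ℝ) := by
    calc κg ^ (2/3:ℝ) ≤ (c0*κ0) ^ (2/3:ℝ) := Real.rpow_le_rpow hκg.le hκgc0 (by norm_num)
      _ = _ := Real.mul_rpow (by linarith) hκ0pos.le
  have hs5 : Sc ^ (1/3:ℝ) ≤ c5 ^ (1/3:ℝ) := Real.rpow_le_rpow hScpos.le hSc2 (by norm_num)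
  have hs4 : c4 ^ (1/3:ℝ) ≤ Sc ^ (1/3:ℝ) := Real.rpow_le_rpow hc4.le hSc1 (by norm_num)
  rw [hkT, hκβeq]
  rw [hεinv, hκginv] at hLo hUp
  constructor
  · -- lower bound
    have hDpos : 0 < μ * (c3 * (c2 * χ * (ε^(1/3:ℝ))⁻¹ * (κg^(2/3:ℝ))⁻¹ * (1-r)⁻¹)) := by
      have : (0:ℝ) < 1 - r := by linarith
      positivity
    have h2 : χ / (μ * (c3 * (c2 * χ * (ε^(1/3:ℝ))⁻¹ * (κg^(2/3:ℝ))⁻¹ * (1-r)⁻¹)))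
        ≤ χ / (μ * (lv * S)) := by
      apply div_le_div_of_nonneg_left hχpos.le (mul_pos hμ (mul_pos hlv hSpos))
      exact mul_le_mul_of_nonneg_left hUp hμ.le
    refine le_trans ?_ h2
    have hrpos : (0:ℝ) < 1 - r := by linarith
    have h3 : χ / (μ * (c3 * (c2 * χ * (ε^(1/3:ℝ))⁻¹ * (κg^(2/3:ℝ))⁻¹ * (1-r)⁻¹)))
        = ε^(1/3:ℝ) * κg^(2/3:ℝ) * (1-r) / (μ * c3 * c2) := by
      field_simp
    rw [h3]
    have h5 : (1-r) * c4^(1/3:ℝ) / (c2*c3) * (ε^(1/3:ℝ) / (Sc^(1/3:ℝ) * μ)) * κ0^(2/3:ℝ)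
        = ((1-r) * c4^(1/3:ℝ) * ε^(1/3:ℝ) * κ0^(2/3:ℝ)) / (c2*c3*(Sc^(1/3:ℝ)*μ)) := by
      field_simp
      try ring
    rw [h5, div_le_div_iff₀ (by positivity) (by positivity)]
    have hprod : c4^(1/3:ℝ) * κ0^(2/3:ℝ) ≤ Sc^(1/3:ℝ) * κg^(2/3:ℝ) :=
      mul_le_mul hs4 hgk0 hk0'.le hs.le
    have hK : (0:ℝ) ≤ (1-r) * ε^(1/3:ℝ) * (μ * c2 * c3) := by positivity
    calc (1-r) * c4^(1/3:ℝ) * ε^(1/3:ℝ) * κ0^(2/3:ℝ) * (μ * c3 * c2)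
        = ((1-r) * ε^(1/3:ℝ) * (μ * c2 * c3)) * (c4^(1/3:ℝ) * κ0^(2/3:ℝ)) := by ring
      _ ≤ ((1-r) * ε^(1/3:ℝ) * (μ * c2 * c3)) * (Sc^(1/3:ℝ) * κg^(2/3:ℝ)) :=
          mul_le_mul_of_nonneg_left hprod hK
      _ = ε^(1/3:ℝ) * κg^(2/3:ℝ) * (1-r) * (c2*c3*(Sc^(1/3:ℝ)*μ)) := by ring
  · -- upper bound
    have h2 : χ / (μ * (lv * S))
        ≤ χ / (μ * (c1 * χ * (ε^(1/3:ℝ))⁻¹ * (κg^(2/3:ℝ))⁻¹)) := by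
      apply div_le_div_of_nonneg_left hχpos.le
        (mul_pos hμ (mul_pos (mul_pos (mul_pos hc1 hχpos) (inv_pos.2 he)) (inv_pos.2 hg)))
      exact mul_le_mul_of_nonneg_left hLo hμ.le
    refine h2.trans ?_
    have h3 : χ / (μ * (c1 * χ * (ε^(1/3:ℝ))⁻¹ * (κg^(2/3:ℝ))⁻¹))
        = ε^(1/3:ℝ) * κg^(2/3:ℝ) / (μ * c1) := by
      field_simp
    rw [h3]
    have h5 : c0^(2/3:ℝ) * c5^(1/3:ℝ) / c1 * (ε^(1/3:ℝ) / (Sc^(1/3:ℝ) * μ)) * κ0^(2/3:ℝ)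
        = (c0^(2/3:ℝ) * c5^(1/3:ℝ) * ε^(1/3:ℝ) * κ0^(2/3:ℝ)) / (c1*(Sc^(1/3:ℝ)*μ)) := by
      field_simp
      try ring
    rw [h5, div_le_div_iff₀ (by positivity) (by positivity)]
    have hprod : κg^(2/3:ℝ) * Sc^(1/3:ℝ) ≤ (c0^(2/3:ℝ) * κ0^(2/3:ℝ)) * c5^(1/3:ℝ) :=
      mul_le_mul hgc0 hs5 hs.le (by positivity)
    have hK : (0:ℝ) ≤ ε^(1/3:ℝ) * (μ * c1) := by positivity
    calc ε^(1/3:ℝ) * κg^(2/3:ℝ) * (c1*(Sc^(1/3:ℝ)*μ))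
        = (ε^(1/3:ℝ) * (μ * c1)) * (κg^(2/3:ℝ) * Sc^(1/3:ℝ)) := by ring
      _ ≤ (ε^(1/3:ℝ) * (μ * c1)) * ((c0^(2/3:ℝ) * κ0^(2/3:ℝ)) * c5^(1/3:ℝ)) :=
          mul_le_mul_of_nonneg_left hprod hK
      _ = c0^(2/3:ℝ) * c5^(1/3:ℝ) * ε^(1/3:ℝ) * κ0^(2/3:ℝ) * (μ * c1) := by ring
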